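/- Let 𝒢 = (G, o, R_1, …, R_n) be a functional Menger system of rank n and let H be a nonempty subset of G. Then H is a stabilizer of 𝒢 if and only if H is a quasi-stable l-unitary normal v-complex with R_i H ⊆ H for every i ∈ {1,…,n}, and for every m ∈ ℕ the condition (A'_m) holds: for all x, y, u ∈ G, w̄ ∈ G^n, i ∈ {1,…,n}, if x = y[R_1x…R_nx], x ∈ C_H^m(H) and u[w̄|_i y] ∈ H, then u[w̄|_i x] ∈ H (and also, with the outer symbol empty, if x = y[R_1x…R_nx], x ∈ C_H^m(H) and y ∈ H then x ∈ H). -/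

import Mathlib

universe u

/-- A functional Menger system of rank `n`: an `(n+1)`-ary operation `o`
(written `x[y₁…yₙ]` in the paper) and `n` unary operations `R i`,
satisfying axioms A1–A7. -/
structure MengerSystem (n : ℕ) (G : Type u) where
  o : G → (Fin n → G) → G
  R : Fin n → G → G
  A1 : ∀ (x : G) (y z : Fin n → G),
    o (o x y) z = o x fun i => o (y i) z
  A2 : ∀ x : G, o x (fun i => R i x) = x
  A3 : ∀ (x : G) (u : Fin n → G) (i : Fin n) (z y : G),
    o (o x (Function.update u i z)) (fun j => R j y)
      = o x (Function.update u i (o z fun j => R j y))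
  A4 : ∀ (i : Fin n) (x y : G),
    R i (o x fun j => R j y) = o (R i x) fun j => R j y
  A5 : ∀ (x y z : G),
    o (o x fun j => R j y) (fun j => R j z)
      = o (o x fun j => R j z) (fun j => R j y)
  A6 : ∀ (i k : Fin n) (x : G) (y : Fin n → G),
    R i (o x y) = R i (o (R k x) y)
  A7 : ∀ (i : Fin n) (x : G) (y : Fin n → G),
    o (R i x) y = o (y i) fun j => R j (o x y)

namespace MengerSystem

variable {n : ℕ} {G : Type u}

/-- `T_n(G)`: the least set of transformations of `G` containing the identity and
closed under `t ↦ (x ↦ a[b̄|ᵢ t x])` and `t ↦ (x ↦ Rᵢ (t x))`. -/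
inductive IsTn (M : MengerSystem n G) : (G → G) → Prop
  | id : IsTn M id
  | op (t : G → G) (a : G) (b : Fin n → G) (i : Fin n) :
      IsTn M t → IsTn M fun x => M.o a (Function.update b i (t x))
  | proj (t : G → G) (i : Fin n) :
      IsTn M t → IsTn M fun x => M.R i (t x)

/-- quasi-stable: `x ∈ H → x[x…x] ∈ H`. -/
def QuasiStable (M : MengerSystem n G) (H : Set G) : Prop :=
  ∀ x ∈ H, M.o x (fun _ => x) ∈ H

/-- l-unitary: `x[y…y] ∈ H ∧ y ∈ H → x ∈ H`. -/
def LUnitary (M : MengerSystem n G) (H : Set G) : Prop :=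
  ∀ x y : G, M.o x (fun _ => y) ∈ H → y ∈ H → x ∈ H

/-- normal v-complex: `x, y ∈ H ∧ t x ∈ H → t y ∈ H` for all `t ∈ T_n(G)`. -/
def NormalVComplex (M : MengerSystem n G) (H : Set G) : Prop :=
  ∀ t : G → G, M.IsTn t → ∀ x ∈ H, ∀ y ∈ H, t x ∈ H → t y ∈ H

/-- stable: `x, y₁, …, yₙ ∈ H → x[y₁…yₙ] ∈ H`. -/
def Stable (M : MengerSystem n G) (H : Set G) : Prop :=
  ∀ (x : G) (y : Fin n → G), x ∈ H → (∀ i, y i ∈ H) → M.o x y ∈ H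

/-- v-unitary: `x[y₁…yₙ] ∈ H ∧ y₁, …, yₙ ∈ H → x ∈ H`. -/
def VUnitary (M : MengerSystem n G) (H : Set G) : Prop :=
  ∀ (x : G) (y : Fin n → G), M.o x y ∈ H → (∀ i, y i ∈ H) → x ∈ H

/-- l-ideal: `x[y₁…yₙ] ∈ H` whenever some `yᵢ ∈ H`. -/
def LIdeal (M : MengerSystem n G) (H : Set G) : Prop :=
  ∀ (x : G) (y : Fin n → G), (∃ i, y i ∈ H) → M.o x y ∈ H

/-- the order `x ≤ y ↔ x = y[R₁x…Rₙx]` (the relation ζ). -/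
def le (M : MengerSystem n G) (x y : G) : Prop :=
  x = M.o y fun i => M.R i x

/-- the quasi-order `x ⊏ y ↔ R₁x ≤ R₁y` (the relation χ). -/
def sub (M : MengerSystem n G) [NeZero n] (x y : G) : Prop :=
  M.le (M.R 0 x) (M.R 0 y)

/-- v-regular binary relation. -/
def VRegular (M : MengerSystem n G) (ρ : G → G → Prop) : Prop :=
  ∀ (z : G) (x y : Fin n → G), (∀ i, ρ (x i) (y i)) → ρ (M.o z x) (M.o z y)

end MengerSystem

/-- An `n`-place function on `A`: a partial map from `Aⁿ` to `A`. -/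
def NPlace (n : ℕ) (A : Type u) : Type u := (Fin n → A) → Part A

namespace NPlace

variable {n : ℕ} {A : Type u}

/-- Menger composition `f[g₁…gₙ]` of `n`-place functions. -/
def comp (f : NPlace n A) (g : Fin n → NPlace n A) : NPlace n A :=
  fun a =>
    (⟨∀ i, (g i a).Dom, fun h i => (g i a).get (h i)⟩ : Part (Fin n → A)).bind f

/-- `Rᵢ f`: same domain as `f`, value `(Rᵢ f)(a₁,…,aₙ) = aᵢ`. -/
def Ri (i : Fin n) (f : NPlace n A) : NPlace n A :=
  fun a => (f a).map fun _ => a i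

/-- Set-theoretic intersection of two `n`-place functions (as sets of pairs). -/
def inter (f g : NPlace n A) : NPlace n A :=
  fun a => ⟨(f a).Dom ∧ f a = g a, fun h => (f a).get h.1⟩

end NPlace

/-- A representation of a functional Menger system by `n`-place functions. -/
def MengerSystem.IsRep {n : ℕ} {G : Type u} (M : MengerSystem n G) {A : Type u}
    (P : G → NPlace n A) : Prop :=
  (∀ (x : G) (y : Fin n → G), P (M.o x y) = NPlace.comp (P x) fun i => P (y i)) ∧
  (∀ (i : Fin n) (x : G), P (M.R i x) = NPlace.Ri i (P x))

/-- A nonempty `H ⊆ G` is a stabilizer of `M` if there are a representation `P`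
on some set `A` and a point `a ∈ A` with `H = {g | P g (a,…,a) = a}`. -/
def MengerSystem.IsStabilizer {n : ℕ} {G : Type u} (M : MengerSystem n G)
    (H : Set G) : Prop :=
  ∃ (A : Type u) (P : G → NPlace n A) (a : A),
    M.IsRep P ∧ H = {g : G | a ∈ P g fun _ => a}

/-- The operator `C_H`: `c ∈ C_H(X)` iff there are `a, b, t` with
`(a ≤ b ∨ a, b ∈ H)`, `t a ⊏ c`, `a ∈ X` and `t b ∈ X`. -/
def MengerSystem.CH {n : ℕ} {G : Type u} [NeZero n] (M : MengerSystem n G)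
    (H X : Set G) : Set G :=
  {c | ∃ (a b : G) (t : G → G), M.IsTn t ∧ (M.le a b ∨ (a ∈ H ∧ b ∈ H)) ∧
    M.sub (t a) c ∧ a ∈ X ∧ t b ∈ X}

/-- Iterates `C_H^m(X)`. -/
def MengerSystem.CHiter {n : ℕ} {G : Type u} [NeZero n] (M : MengerSystem n G)
    (H X : Set G) : ℕ → Set G
  | 0 => X
  | m + 1 => M.CH H (M.CHiter H X m)

/-- `C_H[X] = ⋃ₘ C_H^m(X)`. -/
def MengerSystem.CHcl {n : ℕ} {G : Type u} [NeZero n] (M : MengerSystem n G)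
    (H X : Set G) : Set G :=
  ⋃ m : ℕ, M.CHiter H X m


namespace MengerSystem

variable {n : ℕ} {G : Type u} (M : MengerSystem n G)

/-- `R i (R k x) = R i x`. -/
theorem R_R (i k : Fin n) (x : G) : M.R i (M.R k x) = M.R i x := by
  have h1 : M.R k (M.o x fun j => M.R j x) = M.o (M.R k x) fun j => M.R j x := M.A4 k x x
  rw [M.A2] at h1
  have h2 := M.A6 i k x (fun j => M.R j x)
  rw [M.A2, ← h1] at h2
  exact h2.symm

theorem Rb_R (k : Fin n) (x : G) : (fun j => M.R j (M.R k x)) = fun j => M.R j x := by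
  funext j; exact M.R_R j k x

/-- absorption: `z[Rw][Rw] = z[Rw]` style: `(R i z)[Rw] = R i (z[Rw])` is A4. -/
theorem o_Rb_absorb (z w : G) :
    M.o z (fun j => M.R j (M.o z fun i => M.R i w)) = M.o z (fun j => M.R j w) := by
  have h : (fun j => M.R j (M.o z fun i => M.R i w))
      = fun j => M.o (M.R j z) (fun i => M.R i w) := by
    funext j; exact M.A4 j z w
  rw [h, ← M.A1, M.A2]

/-- `z[Rw] ≤ z`. -/
theorem le_o_Rb (z w : G) : M.le (M.o z fun j => M.R j w) z := by
  unfold le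
  exact (M.o_Rb_absorb z w).symm

theorem le_refl (x : G) : M.le x x := (M.A2 x).symm

theorem le_trans {x y z : G} (hxy : M.le x y) (hyz : M.le y z) : M.le x z := by
  unfold le at *
  have h : (fun i => M.R i x) = fun i => M.o (M.R i y) fun j => M.R j x := by
    funext i
    conv_lhs => rw [hxy]
    exact M.A4 i y x
  calc x = M.o y fun i => M.R i x := hxy
    _ = M.o (M.o z fun i => M.R i y) (fun i => M.R i x) := by rw [← hyz]
    _ = M.o z (fun i => M.o (M.R i y) fun j => M.R j x) := M.A1 z _ _
    _ = M.o z fun i => M.R i x := by rw [← h]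

theorem le_R {x y : G} (i : Fin n) (h : M.le x y) : M.le (M.R i x) (M.R i y) := by
  unfold le at *
  rw [Rb_R]
  calc M.R i x = M.R i (M.o y fun j => M.R j x) := by rw [← h]
    _ = M.o (M.R i y) fun j => M.R j x := M.A4 i y x

/-- monotonicity of `T_n` transformations w.r.t. `≤`. -/
theorem le_Tn {x y : G} (h : M.le x y) {t : G → G} (ht : M.IsTn t) :
    M.le (t x) (t y) := by
  induction ht with
  | id => exact h
  | proj t i ht ih => exact M.le_R i ih
  | op t a b i ht ih =>
    set p := t x with hp
    set q := t y with hq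
    -- ih : p = q[Rp]
    unfold le at ih ⊢
    set c := M.o a (Function.update b i p) with hc
    have habs : M.o c (fun j => M.R j p) = c := by
      rw [hc, M.A3, M.A2]
    have claim3 : M.o (M.o q fun j => M.R j c) (fun j => M.R j p)
        = M.o q fun j => M.R j c := by
      rw [M.A1]
      congr 1
      funext j
      rw [← M.A4, habs]
    have claim2 : M.o q (fun j => M.R j c) = M.o p fun j => M.R j c := by
      conv_rhs => rw [ih]
      rw [M.A5, claim3]
    show c = M.o (M.o a (Function.update b i q)) fun j => M.R j c
    rw [M.A1]
    have harg : (fun j => M.o (Function.update b i q j) fun k => M.R k c)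
        = fun j => M.o (Function.update b i p j) fun k => M.R k c := by
      funext j
      by_cases hj : j = i
      · subst hj; rw [Function.update_self, Function.update_self, claim2]
      · rw [Function.update_of_ne hj, Function.update_of_ne hj]
    rw [harg, ← M.A1, ← hc, M.A2]

theorem sub_of_le {x y : G} [NeZero n] (h : M.le x y) : M.sub x y := M.le_R 0 h

theorem sub_refl [NeZero n] (x : G) : M.sub x x := M.le_refl _

theorem sub_trans [NeZero n] {x y z : G} (h1 : M.sub x y) (h2 : M.sub y z) :
    M.sub x z := M.le_trans h1 h2

/-- `x ⊏ y` whenever `R 0 x = R 0 y`-ish: helper. -/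
theorem sub_of_R0_eq [NeZero n] {x y : G} (h : M.R 0 x = M.R 0 y) : M.sub x y := by
  unfold sub; rw [h]; exact M.le_refl _

/-- Lemma (C): `a[z̄] ⊏ z̄ j`. -/
theorem sub_o_arg [NeZero n] (a : G) (z : Fin n → G) (j : Fin n) :
    M.sub (M.o a z) (z j) := by
  unfold sub le
  rw [Rb_R]
  calc M.R 0 (M.o a z)
      = M.R 0 (M.o (M.R j a) z) := M.A6 0 j a z
    _ = M.R 0 (M.o (z j) fun k => M.R k (M.o a z)) := by rw [M.A7]
    _ = M.o (M.R 0 (z j)) fun k => M.R k (M.o a z) := M.A4 0 (z j) (M.o a z)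

/-- Lemma (S11): `(g[ȳ])[h̄] ⊏ (ȳ j)[h̄]`. -/
theorem sub_comp_arg [NeZero n] (g : G) (y h : Fin n → G) (j : Fin n) :
    M.sub (M.o (M.o g y) h) (M.o (y j) h) := by
  unfold sub le
  rw [Rb_R]
  set v := M.o (M.o g y) h with hv
  have key : M.o (M.o (y j) h) (fun k => M.R k v) = M.o (M.R j g) fun k => M.o (y k) h := by
    rw [M.A1]
    have h1 : (fun k => M.o (h k) fun m => M.R m v)
        = fun k => M.o (M.R k (M.o g y)) h := by
      funext k
      rw [M.A7 k (M.o g y) h]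
    rw [h1]
    have h2 : (fun k => M.o (M.R k (M.o g y)) h)
        = fun k => M.o ((fun m => M.R m (M.o g y)) k) h := rfl
    rw [h2, ← M.A1, ← M.A7, M.A1]
  calc M.R 0 v
      = M.R 0 (M.o (M.o g y) h) := rfl
    _ = M.R 0 (M.o g fun k => M.o (y k) h) := by rw [M.A1]
    _ = M.R 0 (M.o (M.R j g) fun k => M.o (y k) h) := M.A6 0 j g _
    _ = M.R 0 (M.o (M.o (y j) h) fun k => M.R k v) := by rw [key]
    _ = M.o (M.R 0 (M.o (y j) h)) fun k => M.R k v := M.A4 0 _ v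

end MengerSystem

namespace MengerSystem

variable {n : ℕ} {G : Type u} (M : MengerSystem n G) [NeZero n] (H : Set G)

theorem CH_mono {X Y : Set G} (h : X ⊆ Y) : M.CH H X ⊆ M.CH H Y := by
  rintro c ⟨a, b, t, ht, hab, hsub, ha, htb⟩
  exact ⟨a, b, t, ht, hab, hsub, h ha, h htb⟩

theorem subset_CH (X : Set G) : X ⊆ M.CH H X := by
  intro c hc
  exact ⟨c, c, _root_.id, IsTn.id, Or.inl (M.le_refl c), M.sub_refl c, hc, hc⟩

theorem CHiter_mono_succ (X : Set G) (m : ℕ) :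
    M.CHiter H X m ⊆ M.CHiter H X (m + 1) := M.subset_CH H _

theorem CHiter_mono (X : Set G) {m m' : ℕ} (h : m ≤ m') :
    M.CHiter H X m ⊆ M.CHiter H X m' := by
  induction h with
  | refl => exact fun _ h => h
  | step _ ih => exact fun c hc => M.CHiter_mono_succ H X _ (ih hc)

/-- membership in `W = C_H[H]`. -/
theorem mem_CHcl_iff {g : G} : g ∈ M.CHcl H H ↔ ∃ m, g ∈ M.CHiter H H m :=
  Set.mem_iUnion

theorem H_subset_CHcl : H ⊆ M.CHcl H H := fun g hg =>
  (M.mem_CHcl_iff H).2 ⟨0, hg⟩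

/-- WL1: upward closure of `W` under `⊏`. -/
theorem CHcl_sub_closed {g c : G} (hg : g ∈ M.CHcl H H) (hsub : M.sub g c) :
    c ∈ M.CHcl H H := by
  obtain ⟨m, hm⟩ := (M.mem_CHcl_iff H).1 hg
  exact (M.mem_CHcl_iff H).2
    ⟨m + 1, g, g, _root_.id, IsTn.id, Or.inl (M.le_refl g), hsub, hm, hm⟩

/-- WL2: the combining rule. -/
theorem CHcl_combine {a b : G} {t : G → G} (ht : M.IsTn t)
    (hab : M.le a b ∨ (a ∈ H ∧ b ∈ H))
    (ha : a ∈ M.CHcl H H) (htb : t b ∈ M.CHcl H H) : t a ∈ M.CHcl H H := by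
  obtain ⟨m1, hm1⟩ := (M.mem_CHcl_iff H).1 ha
  obtain ⟨m2, hm2⟩ := (M.mem_CHcl_iff H).1 htb
  refine (M.mem_CHcl_iff H).2 ⟨max m1 m2 + 1, a, b, t, ht, hab, M.sub_refl _, ?_, ?_⟩
  · exact M.CHiter_mono H H (le_max_left m1 m2) hm1
  · exact M.CHiter_mono H H (le_max_right m1 m2) hm2

theorem CHcl_R (i : Fin n) {g : G} (hg : g ∈ M.CHcl H H) : M.R i g ∈ M.CHcl H H :=
  M.CHcl_sub_closed H hg (M.sub_of_R0_eq (M.R_R 0 i g).symm)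

theorem CHcl_of_R {i : Fin n} {g : G} (hg : M.R i g ∈ M.CHcl H H) : g ∈ M.CHcl H H :=
  M.CHcl_sub_closed H hg (M.sub_of_R0_eq (M.R_R 0 i g))

/-- WL5: `a[z̄] ∈ W → z̄ j ∈ W`. -/
theorem CHcl_arg {a : G} {z : Fin n → G} (j : Fin n)
    (h : M.o a z ∈ M.CHcl H H) : z j ∈ M.CHcl H H :=
  M.CHcl_sub_closed H h (M.sub_o_arg a z j)

/-- WL6. -/
theorem CHcl_comp_arg {g : G} {y h : Fin n → G} (j : Fin n)
    (hw : M.o (M.o g y) h ∈ M.CHcl H H) : M.o (y j) h ∈ M.CHcl H H :=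
  M.CHcl_sub_closed H hw (M.sub_comp_arg g y h j)

/-- WL7. -/
theorem CHcl_Rhead_iff (i : Fin n) (g : G) (h : Fin n → G) :
    M.o (M.R i g) h ∈ M.CHcl H H ↔ M.o g h ∈ M.CHcl H H := by
  constructor
  · intro hh
    exact M.CHcl_sub_closed H hh (M.sub_of_R0_eq (M.A6 0 i g h).symm)
  · intro hh
    exact M.CHcl_sub_closed H hh (M.sub_of_R0_eq (M.A6 0 i g h))

/-- WL8 (K). -/
theorem CHcl_le_transfer {x y : G} {t : G → G} (ht : M.IsTn t) (hxy : M.le x y)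
    (hx : x ∈ M.CHcl H H) (hty : t y ∈ M.CHcl H H) : t x ∈ M.CHcl H H :=
  M.CHcl_combine H ht (Or.inl hxy) hx hty

/-- WL9 (N). -/
theorem CHcl_H_transfer {x y : G} {t : G → G} (ht : M.IsTn t)
    (hx : x ∈ H) (hy : y ∈ H) (htx : t x ∈ M.CHcl H H) : t y ∈ M.CHcl H H :=
  M.CHcl_combine H ht (Or.inr ⟨hy, hx⟩) (M.H_subset_CHcl H hy) htx

/-- `W` is closed under the le-image of Tn transfers downward. -/
theorem CHcl_Tn_of_le {x y : G} {t : G → G} (ht : M.IsTn t) (hxy : M.le x y)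
    (htx : t x ∈ M.CHcl H H) : t y ∈ M.CHcl H H :=
  M.CHcl_sub_closed H htx (M.sub_of_le (M.le_Tn hxy ht))

/-- Composition closure of `T_n`. -/
theorem IsTn.comp {t s : G → G} (ht : M.IsTn t) (hs : M.IsTn s) :
    M.IsTn (fun x => t (s x)) := by
  induction ht with
  | id => exact hs
  | op t' a b i ht' ih => exact IsTn.op _ a b i ih
  | proj t' i ht' ih => exact IsTn.proj _ i ih

end MengerSystem

namespace MengerSystem

variable {n : ℕ} {G : Type u} (M : MengerSystem n G) [NeZero n] (H : Set G)

omit [NeZero n] in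
/-- chain induction: replace the arguments of `g[v̄]` one slot at a time by `w̄`. -/
theorem chain (g : G) (v w : Fin n → G) (ρ : G → Prop)
    (hstep : ∀ u : Fin n → G, (∀ j, u j = v j ∨ u j = w j) → ∀ i : Fin n,
      ρ (M.o g u) → ρ (M.o g (Function.update u i (w i))))
    (h0 : ρ (M.o g v)) : ρ (M.o g w) := by
  set u : ℕ → Fin n → G := fun k j => if (j : ℕ) < k then w j else v j with hu
  have claim : ∀ k, k ≤ n → (∀ j, u k j = v j ∨ u k j = w j) ∧ ρ (M.o g (u k)) := by
    intro k
    induction k with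
    | zero =>
      intro _
      have h1 : u 0 = v := by funext j; simp [hu]
      rw [h1]
      exact ⟨fun j => Or.inl rfl, h0⟩
    | succ k ih =>
      intro hk
      have hk' : k < n := hk
      obtain ⟨hinv, hρ⟩ := ih (Nat.le_of_lt hk')
      set i : Fin n := ⟨k, hk'⟩ with hi
      have h1 : u (k + 1) = Function.update (u k) i (w i) := by
        funext j
        by_cases hj : j = i
        · subst hj
          simp [hu, Function.update_self, hi]
        · have hj' : (j : ℕ) ≠ k := by
            intro hc; exact hj (Fin.ext hc)
          rw [Function.update_of_ne hj]
          simp only [hu]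
          have : ((j : ℕ) < k + 1) ↔ ((j : ℕ) < k) := by omega
          rw [if_congr this rfl rfl]
      constructor
      · intro j
        rw [h1]
        by_cases hj : j = i
        · subst hj; rw [Function.update_self]; exact Or.inr rfl
        · rw [Function.update_of_ne hj]; exact hinv j
      · rw [h1]
        exact hstep (u k) hinv i hρ
  have hn : u n = w := by
    funext j; simp [hu, j.isLt]
  have := (claim n le_rfl).2
  rwa [hn] at this

omit [NeZero n] in
/-- one-slot normality gives full stability over `H`-tuples. -/
theorem H_chain (hNV : M.NormalVComplex H) {g h : G} {v : Fin n → G}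
    (hv : ∀ j, v j ∈ H) (hh : h ∈ H) (h0 : M.o g v ∈ H) :
    M.o g (fun _ => h) ∈ H := by
  refine M.chain g v (fun _ => h) (· ∈ H) ?_ h0
  intro u hu i hρ
  have ht : M.IsTn (fun z => M.o g (Function.update u i z)) :=
    IsTn.op _root_.id g u i IsTn.id
  have hui : u i ∈ H := by
    rcases hu i with h' | h'
    · rw [h']; exact hv i
    · rw [h']; exact hh
  have hx : (fun z => M.o g (Function.update u i z)) (u i) ∈ H := by
    simpa [Function.update_eq_self] using hρ
  exact hNV _ ht (u i) hui h hh hx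

omit [NeZero n] in
/-- (L): `H` is upward closed for `≤`. -/
theorem H_le_up (hLU : M.LUnitary H) (hNV : M.NormalVComplex H)
    (hR : ∀ i : Fin n, ∀ x ∈ H, M.R i x ∈ H)
    {x z : G} (hxz : M.le x z) (hx : x ∈ H) : z ∈ H := by
  have h0 : M.o z (fun j => M.R j x) ∈ H := by rw [← hxz]; exact hx
  have h1 : M.o z (fun _ => x) ∈ H :=
    M.H_chain H hNV (fun j => hR j x hx) hx h0
  exact hLU z x h1 hx

omit [NeZero n] in
theorem Tn_H_up (hLU : M.LUnitary H) (hNV : M.NormalVComplex H)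
    (hR : ∀ i : Fin n, ∀ x ∈ H, M.R i x ∈ H)
    {x z : G} (hxz : M.le x z) {t : G → G} (ht : M.IsTn t)
    (htx : t x ∈ H) : t z ∈ H :=
  M.H_le_up H hLU hNV hR (M.le_Tn hxz ht) htx

theorem Tn_H_down
    (hA1' : ∀ (m : ℕ) (x y u : G) (w : Fin n → G) (i : Fin n),
      x = M.o y (fun j => M.R j x) → x ∈ M.CHiter H H m →
      M.o u (Function.update w i y) ∈ H → M.o u (Function.update w i x) ∈ H)
    (hA2' : ∀ (m : ℕ) (x y : G), x = M.o y (fun j => M.R j x) →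
      x ∈ M.CHiter H H m → y ∈ H → x ∈ H)
    {x y : G} (hxy : M.le x y) (hx : x ∈ M.CHcl H H)
    {t : G → G} (ht : M.IsTn t) (hty : t y ∈ H) : t x ∈ H := by
  induction ht with
  | id =>
    obtain ⟨m, hm⟩ := (M.mem_CHcl_iff H).1 hx
    exact hA2' m x y hxy hm hty
  | op t' a b i ht' ih =>
    have hW : M.o a (Function.update b i (t' y)) ∈ M.CHcl H H :=
      M.H_subset_CHcl H hty
    have h1 : t' y ∈ M.CHcl H H := by
      have := M.CHcl_arg H (a := a) (z := Function.update b i (t' y)) i hW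
      rwa [Function.update_self] at this
    have h2 : t' x ∈ M.CHcl H H := M.CHcl_le_transfer H ht' hxy hx h1
    have hle : M.le (t' x) (t' y) := M.le_Tn hxy ht'
    obtain ⟨m, hm⟩ := (M.mem_CHcl_iff H).1 h2
    exact hA1' m (t' x) (t' y) a b i hle hm hty
  | proj t' i ht' ih =>
    have h1 : t' y ∈ M.CHcl H H :=
      M.CHcl_of_R H (M.H_subset_CHcl H hty)
    have h2 : t' x ∈ M.CHcl H H := M.CHcl_le_transfer H ht' hxy hx h1
    have h3 : M.R i (t' x) ∈ M.CHcl H H := M.CHcl_R H i h2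
    have hle : M.le (M.R i (t' x)) (M.R i (t' y)) := M.le_R i (M.le_Tn hxy ht')
    obtain ⟨m, hm⟩ := (M.mem_CHcl_iff H).1 h3
    exact hA2' m _ _ hle hm hty

/-- the equivalence used to build the representation. -/
def rel (x y : G) : Prop :=
  ∀ t : G → G, M.IsTn t →
    ((t x ∈ H ↔ t y ∈ H) ∧ (t x ∈ M.CHcl H H ↔ t y ∈ M.CHcl H H))

theorem rel_refl (x : G) : M.rel H x x := fun _ _ => ⟨Iff.rfl, Iff.rfl⟩

theorem rel_symm {x y : G} (h : M.rel H x y) : M.rel H y x :=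
  fun t ht => ⟨(h t ht).1.symm, (h t ht).2.symm⟩

theorem rel_trans {x y z : G} (h1 : M.rel H x y) (h2 : M.rel H y z) :
    M.rel H x z :=
  fun t ht => ⟨(h1 t ht).1.trans (h2 t ht).1, (h1 t ht).2.trans (h2 t ht).2⟩

theorem rel_of_H (hNV : M.NormalVComplex H) {x y : G}
    (hx : x ∈ H) (hy : y ∈ H) : M.rel H x y := by
  intro t ht
  constructor
  · exact ⟨fun h => hNV t ht x hx y hy h, fun h => hNV t ht y hy x hx h⟩
  · exact ⟨fun h => M.CHcl_H_transfer H ht hx hy h,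
      fun h => M.CHcl_H_transfer H ht hy hx h⟩

theorem rel_of_le (hLU : M.LUnitary H) (hNV : M.NormalVComplex H)
    (hR : ∀ i : Fin n, ∀ x ∈ H, M.R i x ∈ H)
    (hA1' : ∀ (m : ℕ) (x y u : G) (w : Fin n → G) (i : Fin n),
      x = M.o y (fun j => M.R j x) → x ∈ M.CHiter H H m →
      M.o u (Function.update w i y) ∈ H → M.o u (Function.update w i x) ∈ H)
    (hA2' : ∀ (m : ℕ) (x y : G), x = M.o y (fun j => M.R j x) →
      x ∈ M.CHiter H H m → y ∈ H → x ∈ H)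
    {x y : G} (hxy : M.le x y) (hx : x ∈ M.CHcl H H) : M.rel H x y := by
  intro t ht
  constructor
  · exact ⟨fun h => M.Tn_H_up H hLU hNV hR hxy ht h,
      fun h => M.Tn_H_down H hA1' hA2' hxy hx ht h⟩
  · exact ⟨fun h => M.CHcl_Tn_of_le H ht hxy h,
      fun h => M.CHcl_le_transfer H ht hxy hx h⟩

theorem rel_mem_H_iff {x y : G} (h : M.rel H x y) : x ∈ H ↔ y ∈ H :=
  (h _root_.id IsTn.id).1

theorem rel_mem_W_iff {x y : G} (h : M.rel H x y) :
    x ∈ M.CHcl H H ↔ y ∈ M.CHcl H H :=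
  (h _root_.id IsTn.id).2

theorem rel_slot {x x' : G} (h : M.rel H x x') (a : G) (b : Fin n → G)
    (i : Fin n) : M.rel H (M.o a (Function.update b i x)) (M.o a (Function.update b i x')) := by
  intro t ht
  have hcomp : M.IsTn fun z => t (M.o a (Function.update b i z)) := by
    have h' := IsTn.comp M ht (IsTn.op _root_.id a b i IsTn.id)
    simpa using h'
  exact h _ hcomp

theorem rel_o_congr {h h' : Fin n → G} (hp : ∀ j, M.rel H (h j) (h' j)) (g : G) :
    M.rel H (M.o g h) (M.o g h') := by
  refine M.chain g h h' (fun z => M.rel H (M.o g h) z) ?_ (M.rel_refl H _)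
  intro u hu i hρ
  refine M.rel_trans H hρ ?_
  have hrel : M.rel H (u i) (h' i) := by
    rcases hu i with h'' | h''
    · rw [h'']; exact hp i
    · rw [h'']; exact M.rel_refl H _
  have := M.rel_slot H hrel g u i
  rwa [Function.update_eq_self] at this

end MengerSystem

namespace NPlace

variable {n : ℕ} {A : Type u}

theorem mem_comp_iff {f : NPlace n A} {g : Fin n → NPlace n A} {a : Fin n → A}
    {b : A} : b ∈ comp f g a ↔
      ∃ hd : ∀ i, (g i a).Dom, b ∈ f (fun i => (g i a).get (hd i)) := by
  unfold comp
  refine Part.mem_bind_iff.trans ?_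
  constructor
  · rintro ⟨v, hv, hb⟩
    obtain ⟨hd, hget⟩ := Part.mem_mk_iff.1 hv
    exact ⟨hd, by rwa [← hget] at hb ⟩
  · rintro ⟨hd, hb⟩
    exact ⟨_, Part.mem_mk_iff.2 ⟨hd, rfl⟩, hb⟩

theorem comp_congr {f : NPlace n A} {g g' : Fin n → NPlace n A} {a : Fin n → A}
    (h : ∀ i, g i a = g' i a) : comp f g a = comp f g' a := by
  unfold comp
  congr 1
  apply Part.ext'
  · constructor
    · intro hd i; rw [← h i]; exact hd i
    · intro hd i; rw [h i]; exact hd i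
  · intro h1 h2
    funext i
    exact Part.mem_unique (Part.get_mem (h1 i))
      (show (g' i a).get (h2 i) ∈ g i a by rw [h i]; exact Part.get_mem (h2 i))

theorem mem_Ri_iff {f : NPlace n A} {i : Fin n} {a : Fin n → A} {b : A} :
    b ∈ Ri i f a ↔ (f a).Dom ∧ b = a i := by
  unfold Ri
  rw [Part.mem_map_iff]
  constructor
  · rintro ⟨c, hc, rfl⟩; exact ⟨hc.fst, rfl⟩
  · rintro ⟨hd, rfl⟩; exact ⟨(f a).get hd, ⟨hd, rfl⟩, rfl⟩

end NPlace

namespace MengerSystem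

variable {n : ℕ} {G : Type u} (M : MengerSystem n G) [NeZero n] (H : Set G)

/-- the underlying set of points: elements of `W = C_H[H]`. -/
def Wsub : Type u := {g : G // g ∈ M.CHcl H H}

/-- the setoid on `W`. -/
def relSetoid : Setoid (M.Wsub H) :=
  ⟨fun a b => M.rel H a.1 b.1,
    ⟨fun a => M.rel_refl H a.1, fun h => M.rel_symm H h,
      fun h1 h2 => M.rel_trans H h1 h2⟩⟩

/-- the set of points of the representation. -/
def AQ : Type u := Quotient (M.relSetoid H)

/-- raw action on representatives. -/
def Praw (g : G) (h : Fin n → M.Wsub H) : Part (M.AQ H) :=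
  ⟨M.o g (fun i => (h i).1) ∈ M.CHcl H H,
    fun hd => Quotient.mk (M.relSetoid H) ⟨M.o g (fun i => (h i).1), hd⟩⟩

theorem Praw_respects (g : G) (a b : Fin n → M.Wsub H)
    (hab : ∀ i, (M.relSetoid H).r (a i) (b i)) : M.Praw H g a = M.Praw H g b := by
  have hrel : M.rel H (M.o g fun i => (a i).1) (M.o g fun i => (b i).1) :=
    M.rel_o_congr H (fun j => hab j) g
  exact Part.ext' (M.rel_mem_W_iff H hrel) (fun h1 h2 => Quotient.sound hrel)

/-- the representation map. -/
def Pq (g : G) (p : Fin n → M.AQ H) : Part (M.AQ H) :=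
  Quotient.finLiftOn (S := fun _ => M.relSetoid H) p (M.Praw H g)
    (M.Praw_respects H g)

theorem Pq_mk (g : G) (h : Fin n → M.Wsub H) :
    M.Pq H g (fun i => Quotient.mk (M.relSetoid H) (h i)) = M.Praw H g h := by
  unfold Pq
  rw [Quotient.finLiftOn_mk (S := fun _ => M.relSetoid H) h]

theorem exists_rep (p : Fin n → M.AQ H) :
    ∃ h : Fin n → M.Wsub H, p = fun i => Quotient.mk (M.relSetoid H) (h i) := by
  choose h hh using fun i => Quotient.exists_rep (p i)
  exact ⟨h, funext fun i => (hh i).symm⟩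

theorem Pq_comp_law (x : G) (y : Fin n → G) :
    M.Pq H (M.o x y) = NPlace.comp (M.Pq H x) fun i => M.Pq H (y i) := by
  funext p
  obtain ⟨h, rfl⟩ := M.exists_rep H p
  apply Part.ext
  intro b
  erw [NPlace.mem_comp_iff, M.Pq_mk]
  constructor
  · rintro ⟨hd, hb⟩
    -- hd : o (o x y) ĥ ∈ W
    have harg : ∀ i, M.o (y i) (fun j => (h j).1) ∈ M.CHcl H H := fun i =>
      M.CHcl_comp_arg H i hd
    have hdall : ∀ i, (M.Pq H (y i) (fun j => Quotient.mk (M.relSetoid H) (h j))).Dom := by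
      intro i; rw [M.Pq_mk]; exact harg i
    refine ⟨hdall, ?_⟩
    have hget : (fun i => (M.Pq H (y i) (fun j => Quotient.mk (M.relSetoid H) (h j))).get
        (hdall i)) = fun i => Quotient.mk (M.relSetoid H) ⟨M.o (y i) (fun j => (h j).1), harg i⟩ := by
      funext i
      have := M.Pq_mk H (y i) h
      exact Part.get_eq_of_mem (by rw [this]; exact ⟨harg i, rfl⟩) _
    erw [hget, M.Pq_mk]
    have hWc : M.o x (fun i => M.o (y i) (fun j => (h j).1)) ∈ M.CHcl H H := by
      rw [← M.A1]; exact hd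
    refine ⟨hWc, ?_⟩
    have hb' : Quotient.mk (M.relSetoid H) ⟨M.o (M.o x y) (fun j => (h j).1), hd⟩ = b := hb
    rw [← hb']
    show Quotient.mk (M.relSetoid H) ⟨M.o x (fun i => M.o (y i) fun j => (h j).1), hWc⟩ = _
    apply congrArg
    apply Subtype.ext
    exact (M.A1 x y fun j => (h j).1).symm
  · rintro ⟨hdall, hb⟩
    have harg : ∀ i, M.o (y i) (fun j => (h j).1) ∈ M.CHcl H H := by
      intro i
      have := hdall i
      rw [M.Pq_mk] at this
      exact this
    have hget : (fun i => (M.Pq H (y i) (fun j => Quotient.mk (M.relSetoid H) (h j))).get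
        (hdall i)) = fun i => Quotient.mk (M.relSetoid H) ⟨M.o (y i) (fun j => (h j).1), harg i⟩ := by
      funext i
      have := M.Pq_mk H (y i) h
      exact Part.get_eq_of_mem (by rw [this]; exact ⟨harg i, rfl⟩) _
    erw [hget, M.Pq_mk] at hb
    obtain ⟨hWc, hbe⟩ := hb
    have hd : M.o (M.o x y) (fun j => (h j).1) ∈ M.CHcl H H := by
      rw [M.A1]; exact hWc
    refine ⟨hd, ?_⟩
    rw [← hbe]
    show Quotient.mk (M.relSetoid H) ⟨M.o (M.o x y) (fun j => (h j).1), hd⟩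
      = Quotient.mk (M.relSetoid H) ⟨M.o x (fun i => M.o (y i) fun j => (h j).1), hWc⟩
    apply congrArg
    apply Subtype.ext
    exact M.A1 x y fun j => (h j).1

theorem Pq_R_law
    (hLU : M.LUnitary H) (hNV : M.NormalVComplex H)
    (hR : ∀ i : Fin n, ∀ x ∈ H, M.R i x ∈ H)
    (hA1' : ∀ (m : ℕ) (x y u : G) (w : Fin n → G) (i : Fin n),
      x = M.o y (fun j => M.R j x) → x ∈ M.CHiter H H m →
      M.o u (Function.update w i y) ∈ H → M.o u (Function.update w i x) ∈ H)
    (hA2' : ∀ (m : ℕ) (x y : G), x = M.o y (fun j => M.R j x) →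
      x ∈ M.CHiter H H m → y ∈ H → x ∈ H)
    (i : Fin n) (x : G) :
    M.Pq H (M.R i x) = NPlace.Ri i (M.Pq H x) := by
  funext p
  obtain ⟨h, rfl⟩ := M.exists_rep H p
  apply Part.ext
  intro b
  erw [NPlace.mem_Ri_iff, M.Pq_mk, M.Pq_mk]
  unfold Praw
  erw [Part.mem_mk_iff]
  show _ ↔ (M.o x (fun j => (h j).1) ∈ M.CHcl H H) ∧ _
  constructor
  · rintro ⟨hd, hbe⟩
    have hW : M.o x (fun j => (h j).1) ∈ M.CHcl H H :=
      (M.CHcl_Rhead_iff H i x _).1 hd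
    refine ⟨hW, ?_⟩
    rw [← hbe]
    apply Quotient.sound
    show M.rel H _ _
    have e7 := M.A7 i x (fun j => (h j).1)
    have hle : M.le (M.o ((h i).1) (fun j => M.R j (M.o x fun j => (h j).1))) ((h i).1) :=
      M.le_o_Rb _ _
    have hWm : M.o ((h i).1) (fun j => M.R j (M.o x fun j => (h j).1)) ∈ M.CHcl H H := by
      rw [← e7]; exact hd
    have := M.rel_of_le H hLU hNV hR hA1' hA2' hle hWm
    rw [← e7] at this
    exact this
  · rintro ⟨hW, hbe⟩
    have hd : M.o (M.R i x) (fun j => (h j).1) ∈ M.CHcl H H :=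
      (M.CHcl_Rhead_iff H i x _).2 hW
    refine ⟨hd, ?_⟩
    subst hbe
    apply Quotient.sound
    show M.rel H _ _
    have e7 := M.A7 i x (fun j => (h j).1)
    have hle : M.le (M.o ((h i).1) (fun j => M.R j (M.o x fun j => (h j).1))) ((h i).1) :=
      M.le_o_Rb _ _
    have hWm : M.o ((h i).1) (fun j => M.R j (M.o x fun j => (h j).1)) ∈ M.CHcl H H := by
      rw [← e7]; exact hd
    have := M.rel_of_le H hLU hNV hR hA1' hA2' hle hWm
    rw [← e7] at this
    exact this

end MengerSystem

namespace MengerSystem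

variable {n : ℕ} {G : Type u} (M : MengerSystem n G) [NeZero n] (H : Set G)

theorem isStabilizer_of_conditions (hH : H.Nonempty)
    (hQS : M.QuasiStable H) (hLU : M.LUnitary H) (hNV : M.NormalVComplex H)
    (hR : ∀ i : Fin n, ∀ x ∈ H, M.R i x ∈ H)
    (hA1' : ∀ (m : ℕ) (x y u : G) (w : Fin n → G) (i : Fin n),
      x = M.o y (fun j => M.R j x) → x ∈ M.CHiter H H m →
      M.o u (Function.update w i y) ∈ H → M.o u (Function.update w i x) ∈ H)
    (hA2' : ∀ (m : ℕ) (x y : G), x = M.o y (fun j => M.R j x) →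
      x ∈ M.CHiter H H m → y ∈ H → x ∈ H) :
    M.IsStabilizer H := by
  obtain ⟨h₀, hh₀⟩ := hH
  set c₀ : M.Wsub H := ⟨h₀, M.H_subset_CHcl H hh₀⟩ with hc₀
  refine ⟨M.AQ H, M.Pq H, Quotient.mk (M.relSetoid H) c₀,
    ⟨M.Pq_comp_law H, fun i x => M.Pq_R_law H hLU hNV hR hA1' hA2' i x⟩, ?_⟩
  ext g
  simp only [Set.mem_setOf_eq]
  have he : M.Pq H g (fun _ => Quotient.mk (M.relSetoid H) c₀) = M.Praw H g (fun _ => c₀) :=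
    M.Pq_mk H g (fun _ => c₀)
  rw [he]
  constructor
  · intro hg
    have hst : M.o g (fun _ => h₀) ∈ H := by
      apply M.H_chain H hNV (v := fun _ => g) (fun _ => hg) hh₀
      exact hQS g hg
    exact ⟨M.H_subset_CHcl H hst, Quotient.sound (M.rel_of_H H hNV hst hh₀)⟩
  · rintro ⟨hd, hbe⟩
    have hrel : M.rel H (M.o g fun _ => h₀) h₀ := Quotient.exact hbe
    have hmem : M.o g (fun _ => h₀) ∈ H := (M.rel_mem_H_iff H hrel).2 hh₀
    exact hLU g h₀ hmem hh₀

end MengerSystem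

namespace MengerSystem

variable {n : ℕ} {G : Type u} (M : MengerSystem n G) [NeZero n] (H : Set G)
variable {A : Type u} {P : G → NPlace n A} {pt : A}

omit [NeZero n] in
theorem val_Tn_congr (hrep : M.IsRep P) {x y : G}
    (h : P x (fun _ => pt) = P y (fun _ => pt)) {t : G → G} (ht : M.IsTn t) :
    P (t x) (fun _ => pt) = P (t y) (fun _ => pt) := by
  induction ht with
  | id => exact h
  | op t a b i ht ih =>
    rw [hrep.1, hrep.1]
    apply NPlace.comp_congr
    intro j
    by_cases hj : j = i
    · subst hj; rw [Function.update_self, Function.update_self]; exact ih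
    · rw [Function.update_of_ne hj, Function.update_of_ne hj]
  | proj t i ht ih =>
    rw [hrep.2, hrep.2]
    unfold NPlace.Ri
    rw [ih]

theorem val_le_mem_iff (hrep : M.IsRep P) {x y : G} (hxy : M.le x y) (b : A) :
    b ∈ P x (fun _ => pt) ↔ (P x (fun _ => pt)).Dom ∧ b ∈ P y (fun _ => pt) := by
  conv_lhs => rw [hxy]
  rw [hrep.1]
  rw [NPlace.comp_congr (g' := fun i => NPlace.Ri i (P x)) (fun i => by rw [hrep.2])]
  rw [NPlace.mem_comp_iff]
  constructor
  · rintro ⟨hd, hb⟩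
    have hdx : (P x (fun _ => pt)).Dom := hd 0
    refine ⟨hdx, ?_⟩
    exact hb
  · rintro ⟨hdx, hb⟩
    exact ⟨fun _ => hdx, hb⟩

theorem val_le_dom (hrep : M.IsRep P) {x y : G} (hxy : M.le x y)
    (hd : (P x (fun _ => pt)).Dom) : (P y (fun _ => pt)).Dom := by
  have hb : (P x (fun _ => pt)).get hd ∈ P x (fun _ => pt) := Part.get_mem hd
  exact (((M.val_le_mem_iff hrep hxy _).1 hb).2).fst

theorem val_le_eq (hrep : M.IsRep P) {x y : G} (hxy : M.le x y)
    (hd : (P x (fun _ => pt)).Dom) :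
    P x (fun _ => pt) = P y (fun _ => pt) := by
  apply Part.ext
  intro b
  constructor
  · intro hb; exact ((M.val_le_mem_iff hrep hxy b).1 hb).2
  · intro hb; exact (M.val_le_mem_iff hrep hxy b).2 ⟨hd, hb⟩

theorem val_CHiter_dom (hrep : M.IsRep P)
    (hHdef : H = {g : G | pt ∈ P g fun _ => pt}) :
    ∀ m : ℕ, ∀ c ∈ M.CHiter H H m, (P c (fun _ => pt)).Dom := by
  intro m
  induction m with
  | zero =>
    intro c hc
    rw [hHdef] at hc
    exact hc.fst
  | succ m ih =>
    rintro c ⟨a, b, t, ht, hab, hsub, ha, htb⟩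
    have hda : (P a (fun _ => pt)).Dom := ih a ha
    have hdtb : (P (t b) (fun _ => pt)).Dom := ih _ htb
    have heq : P a (fun _ => pt) = P b (fun _ => pt) := by
      rcases hab with hle | ⟨haH, hbH⟩
      · exact M.val_le_eq hrep hle hda
      · rw [hHdef] at haH hbH
        exact (Part.eq_some_iff.2 haH).trans (Part.eq_some_iff.2 hbH).symm
    have h2 : P (t a) (fun _ => pt) = P (t b) (fun _ => pt) :=
      M.val_Tn_congr hrep heq ht
    have hdta : (P (t a) (fun _ => pt)).Dom := h2 ▸ hdtb
    have h3 : (P (M.R 0 (t a)) (fun _ => pt)).Dom := by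
      rw [hrep.2]; exact hdta
    have h4 : (P (M.R 0 c) (fun _ => pt)).Dom := M.val_le_dom hrep hsub h3
    rw [hrep.2] at h4
    exact h4

theorem conditions_of_isStabilizer (hst : M.IsStabilizer H) :
    M.QuasiStable H ∧ M.LUnitary H ∧ M.NormalVComplex H ∧
      (∀ i : Fin n, ∀ x ∈ H, M.R i x ∈ H) ∧
      (∀ (m : ℕ) (x y u : G) (w : Fin n → G) (i : Fin n),
        x = M.o y (fun j => M.R j x) → x ∈ M.CHiter H H m →
        M.o u (Function.update w i y) ∈ H →
        M.o u (Function.update w i x) ∈ H) ∧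
      (∀ (m : ℕ) (x y : G), x = M.o y (fun j => M.R j x) →
        x ∈ M.CHiter H H m → y ∈ H → x ∈ H) := by
  obtain ⟨A, P, pt, hrep, hHdef⟩ := hst
  have hmem : ∀ g : G, g ∈ H ↔ pt ∈ P g (fun _ => pt) := by
    intro g; rw [hHdef]; exact Iff.rfl
  refine ⟨?_, ?_, ?_, ?_, ?_, ?_⟩
  · -- QuasiStable
    intro x hx
    rw [hmem] at hx ⊢
    rw [hrep.1, NPlace.mem_comp_iff]
    obtain ⟨hd, he⟩ := hx
    refine ⟨fun _ => hd, ?_⟩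
    show pt ∈ P x fun _ : Fin n => (P x fun _ => pt).get hd
    rw [show (fun _ : Fin n => (P x (fun _ => pt)).get hd) = fun _ : Fin n => pt from
      funext fun _ => he]
    exact ⟨hd, he⟩
  · -- LUnitary
    intro x y hxy hy
    rw [hmem] at hxy hy ⊢
    rw [hrep.1, NPlace.mem_comp_iff] at hxy
    obtain ⟨hd, hb⟩ := hxy
    obtain ⟨hdy, hey⟩ := hy
    have hb' : pt ∈ P x fun _ : Fin n => (P y fun _ => pt).get hdy := hb
    rwa [show (fun _ : Fin n => (P y (fun _ => pt)).get hdy) = fun _ : Fin n => pt from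
      funext fun _ => hey] at hb'
  · -- NormalVComplex
    intro t ht x hx y hy htx
    rw [hmem] at hx hy htx ⊢
    have heq : P x (fun _ => pt) = P y (fun _ => pt) :=
      (Part.eq_some_iff.2 hx).trans (Part.eq_some_iff.2 hy).symm
    have := M.val_Tn_congr hrep heq ht
    rwa [← this]
  · -- R i H ⊆ H
    intro i x hx
    rw [hmem] at hx ⊢
    rw [hrep.2]
    exact ⟨hx.fst, rfl⟩
  · -- A'_m first
    intro m x y u w i hxy hxm huy
    have hd : (P x (fun _ => pt)).Dom := M.val_CHiter_dom H hrep hHdef m x hxm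
    have heq : P x (fun _ => pt) = P y (fun _ => pt) := M.val_le_eq hrep hxy hd
    rw [hmem] at huy ⊢
    rw [hrep.1] at huy ⊢
    have hcc : NPlace.comp (P u) (fun j => P (Function.update w i x j)) (fun _ => pt)
        = NPlace.comp (P u) (fun j => P (Function.update w i y j)) (fun _ => pt) := by
      apply NPlace.comp_congr
      intro j
      show P (Function.update w i x j) (fun _ => pt) = P (Function.update w i y j) (fun _ => pt)
      by_cases hj : j = i
      · subst hj; rw [Function.update_self, Function.update_self]; exact heq
      · rw [Function.update_of_ne hj, Function.update_of_ne hj]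
    rw [hcc]
    exact huy
  · -- A'_m second
    intro m x y hxy hxm hy
    have hd : (P x (fun _ => pt)).Dom := M.val_CHiter_dom H hrep hHdef m x hxm
    have heq : P x (fun _ => pt) = P y (fun _ => pt) := M.val_le_eq hrep hxy hd
    rw [hmem] at hy ⊢
    rwa [heq]

end MengerSystem

/-- **Theorem 3.** A nonempty `H ⊆ G` is a stabilizer of a functional Menger
system of rank `n` iff it is a quasi-stable l-unitary normal v-complex with
`Rᵢ H ⊆ H` satisfying the system of conditions `(A'_m)` for every `m ∈ ℕ`. -/
theorem stabilizer_iff_CHiter {n : ℕ} {G : Type u} [NeZero n] (M : MengerSystem n G)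
    (H : Set G) (hH : H.Nonempty) :
    M.IsStabilizer H ↔
      (M.QuasiStable H ∧ M.LUnitary H ∧ M.NormalVComplex H ∧
        (∀ i : Fin n, ∀ x ∈ H, M.R i x ∈ H) ∧
        (∀ (m : ℕ) (x y u : G) (w : Fin n → G) (i : Fin n),
          x = M.o y (fun j => M.R j x) → x ∈ M.CHiter H H m →
          M.o u (Function.update w i y) ∈ H →
          M.o u (Function.update w i x) ∈ H) ∧
        (∀ (m : ℕ) (x y : G), x = M.o y (fun j => M.R j x) →
          x ∈ M.CHiter H H m → y ∈ H → x ∈ H)) := by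
  constructor
  · intro hst
    exact M.conditions_of_isStabilizer H hst
  · rintro ⟨hQS, hLU, hNV, hR, hA1', hA2'⟩
    exact M.isStabilizer_of_conditions H hH hQS hLU hNV hR hA1' hA2'
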